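/- Consider the Hadamard-product construction with null-space constraints: given an assignment matrix A ∈ ℝ^{k×n} with n = mk and vectors v_1, …, v_m ∈ ℝ^n as in Algorithm 1 (v_j(𝓗_i) ≠ 0 for every row support 𝓗_i, and for j ≥ 2, v_j is a nonzero vector in the common null space of A_1,…,A_{j−1}), let B^T = [A_1^T | … | A_m^T]. Then for every i ∈ {1,…,m}, A_j v_i = 1_k if j = i and A_j v_i = 0_k if j ≠ i; consequently B v_i = f_i for all i ∈ {1,…,m}, so in the absence of stragglers (𝓕 = {1,…,n}) the exact gradient is recovered, i.e. Err_{[n]}(B) = 0. -/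
import Mathlib


open MeasureTheory Matrix

noncomputable section

/-- Random-diagonal encoding matrix: the vertical stack of `A * D_1, …, A * D_m`,
with rows indexed by `Fin m × κ` (block `i`, row `r`). -/
def encB {m : ℕ} {κ ν : Type*} (A : Matrix κ ν ℝ) (d : (Fin m × ν) → ℝ) :
    Matrix (Fin m × κ) ν ℝ :=
  Matrix.of fun p j => A p.2 j * d (p.1, j)

/-- The target matrix `F = [f_1 | … | f_m]`, where `f_i` is `1` on the `i`-th block. -/
def Fmat (m : ℕ) (κ : Type*) : Matrix (Fin m × κ) (Fin m) ℝ :=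
  Matrix.of fun p i => if p.1 = i then 1 else 0

/-- Column submatrix corresponding to the non-straggler set `𝓕`. -/
def subCols {α ν : Type*} (M : Matrix α ν ℝ) (𝓕 : Finset ν) : Matrix α ↥𝓕 ℝ :=
  M.submatrix id (fun j => (j : ν))

/-- Squared Frobenius norm. -/
def frobSq {α β : Type*} [Fintype α] [Fintype β] (M : Matrix α β ℝ) : ℝ :=
  ∑ i, ∑ j, (M i j) ^ 2

/-- The approximation error `Err_𝓕(B) = inf_R ‖B_𝓕 R − F‖_F²`. -/
noncomputable def err {m : ℕ} {κ ν : Type*} [Fintype κ] [Fintype ν]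
    (B : Matrix (Fin m × κ) ν ℝ) (𝓕 : Finset ν) : ℝ :=
  ⨅ R : Matrix ↥𝓕 (Fin m) ℝ, frobSq (subCols B 𝓕 * R - Fmat m κ)

/-- The matrix `A_j` of Algorithm 1: row `i` is supported on `𝓗_i = supp(A(i,:))`,
where it equals `w(𝓗_i)ᵀ / ‖w(𝓗_i)‖₂²`. -/
noncomputable def hadRow {k n : ℕ} (A : Matrix (Fin k) (Fin n) ℝ) (w : Fin n → ℝ) :
    Matrix (Fin k) (Fin n) ℝ :=
  Matrix.of fun i l =>
    if A i l = 0 then 0 else w l / ∑ l', if A i l' = 0 then 0 else (w l') ^ 2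

/-- Vertical stacking of the matrices `A_1, …, A_m`. -/
def stackB {m : ℕ} {κ ν : Type*} (Am : Fin m → Matrix κ ν ℝ) :
    Matrix (Fin m × κ) ν ℝ :=
  Matrix.of fun p l => Am p.1 p.2 l

/-- first part of Lemma 2: the Hadamard-product construction with
null-space constraints satisfies `A_j v_i = δ_{ij} 1_k`, hence `B v_i = f_i` and
exact recovery with no stragglers. -/
theorem stmt5 (k m : ℕ) (hm : 1 < m)
    (A : Matrix (Fin k) (Fin (m * k)) ℝ) (v : Fin m → Fin (m * k) → ℝ)
    (hsupp : ∀ (j : Fin m) (i : Fin k), ∃ l, A i l ≠ 0 ∧ v j l ≠ 0)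
    (hnull : ∀ j : Fin m, 0 < (j : ℕ) →
      v j ≠ 0 ∧ ∀ j' : Fin m, (j' : ℕ) < (j : ℕ) → hadRow A (v j') *ᵥ v j = 0) :
    (∀ i j : Fin m, hadRow A (v j) *ᵥ v i = fun _ => if j = i then (1 : ℝ) else 0) ∧
    (∀ i : Fin m,
      stackB (fun u => hadRow A (v u)) *ᵥ v i = fun p => if p.1 = i then (1 : ℝ) else 0) ∧
    err (stackB fun u => hadRow A (v u)) (Finset.univ : Finset (Fin (m * k))) = 0 := by
  have Spos : ∀ (j : Fin m) (r : Fin k),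
      0 < ∑ l', if A r l' = 0 then 0 else (v j l') ^ 2 := by
    intro j r
    obtain ⟨l, hA, hv⟩ := hsupp j r
    apply Finset.sum_pos'
    · intro l' _; split
      · exact le_refl 0
      · positivity
    · exact ⟨l, Finset.mem_univ l, by simp only [if_neg hA]; positivity⟩
  have hmul : ∀ (j i : Fin m) (r : Fin k),
      (hadRow A (v j) *ᵥ v i) r
        = (∑ l, if A r l = 0 then 0 else v j l * v i l)
          / ∑ l', if A r l' = 0 then 0 else (v j l') ^ 2 := by
    intro j i r
    simp only [hadRow, mulVec, dotProduct, Matrix.of_apply]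
    rw [Finset.sum_div]
    refine Finset.sum_congr rfl fun l _ => ?_
    split
    · simp
    · ring
  have key : ∀ i j : Fin m,
      hadRow A (v j) *ᵥ v i = fun _ => if j = i then (1 : ℝ) else 0 := by
    intro i j
    funext r
    rcases eq_or_ne j i with h | h
    · subst h
      rw [hmul, if_pos rfl, div_eq_one_iff_eq (Spos j r).ne']
      refine Finset.sum_congr rfl fun l _ => ?_
      split
      · rfl
      · ring
    · rw [if_neg h]
      rcases lt_or_gt_of_ne h with hlt | hgt
      · have hji : (j : ℕ) < (i : ℕ) := hlt
        have h0 := (hnull i (by omega)).2 j hji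
        exact congrFun h0 r
      · have hij : (i : ℕ) < (j : ℕ) := hgt
        have h0 := (hnull j (by omega)).2 i hij
        have hz := congrFun h0 r
        rw [hmul] at hz
        simp only [Pi.zero_apply] at hz
        have hN : (∑ l, if A r l = 0 then 0 else v i l * v j l) = 0 := by
          rcases div_eq_zero_iff.mp hz with h' | h'
          · exact h'
          · exact absurd h' (Spos i r).ne'
        rw [hmul]
        have hN' : (∑ l, if A r l = 0 then 0 else v j l * v i l) = 0 := by
          have hcomm : (∑ l, if A r l = 0 then 0 else v j l * v i l)
              = (∑ l, if A r l = 0 then 0 else v i l * v j l) := by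
            refine Finset.sum_congr rfl fun l _ => ?_
            split
            · rfl
            · ring
          rw [hcomm, hN]
        rw [hN', zero_div]
  have hB : ∀ i : Fin m,
      stackB (fun u => hadRow A (v u)) *ᵥ v i
        = fun p => if p.1 = i then (1 : ℝ) else 0 := by
    intro i
    funext p
    have h1 : (stackB (fun u => hadRow A (v u)) *ᵥ v i) p
        = (hadRow A (v p.1) *ᵥ v i) p.2 := rfl
    rw [h1, key i p.1]
  refine ⟨key, hB, ?_⟩
  set B := stackB fun u => hadRow A (v u) with hBdef
  have hnonneg : ∀ R : Matrix ↥(Finset.univ : Finset (Fin (m * k))) (Fin m) ℝ,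
      0 ≤ frobSq (subCols B Finset.univ * R - Fmat m (Fin k)) := by
    intro R
    refine Finset.sum_nonneg fun i _ => Finset.sum_nonneg fun j _ => sq_nonneg _
  set R₀ : Matrix ↥(Finset.univ : Finset (Fin (m * k))) (Fin m) ℝ :=
    fun l i => v i (l : Fin (m * k)) with hR₀
  have hexact : subCols B Finset.univ * R₀ = Fmat m (Fin k) := by
    ext p i
    have h1 : (subCols B Finset.univ * R₀) p i
        = ∑ l : ↥(Finset.univ : Finset (Fin (m * k))), B p (l : Fin (m * k)) * v i (l : Fin (m * k)) := rfl
    rw [h1, Finset.sum_coe_sort (Finset.univ : Finset (Fin (m * k)))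
      (fun l => B p l * v i l)]
    have h2 : ∑ l, B p l * v i l = (B *ᵥ v i) p := rfl
    rw [h2, hB i]
    rfl
  have hval : frobSq (subCols B Finset.univ * R₀ - Fmat m (Fin k)) = 0 := by
    rw [hexact, sub_self]
    simp [frobSq]
  refine le_antisymm ?_ (le_ciInf hnonneg)
  calc err B Finset.univ ≤ frobSq (subCols B Finset.univ * R₀ - Fmat m (Fin k)) :=
        ciInf_le ⟨0, fun x ⟨R, hR⟩ => hR ▸ hnonneg R⟩ R₀
    _ = 0 := hval

end
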